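/- arXiv:2108.00943 — 3 statements merged into one kernel-verified Lean document; each statement's English description precedes it below -/
import Mathlib

section
/- For a partition λ = ⟨1^{m_1}, ..., k^{m_k}⟩ and every 0 ≤ d ≤ k, the d-th derivative of the partition polynomial satisfies f_λ^{(d)}(x) = Σ_{i=1}^{k} i^d m_i x^{i-d} − Σ_{j=0}^{d-1} S(d,j) x^{j-d} f_λ^{(j)}(x), where S(d,j) denotes the Stirling number of the second kind. -/
/-- The partition polynomial of the partition `⟨1^(m 1), …, k^(m k)⟩`. -/
noncomputable def partitionPoly (k : ℕ) (m : ℕ → ℕ) (x : ℝ) : ℝ :=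
  ∑ i ∈ Finset.Icc 1 k, (m i : ℝ) * x ^ i

/-- Stirling numbers of the second kind. -/
def stirling2 : ℕ → ℕ → ℕ
  | 0, 0 => 1
  | 0, _ + 1 => 0
  | _ + 1, 0 => 0
  | n + 1, j + 1 => (j + 1) * stirling2 n (j + 1) + stirling2 n j

lemma stirling2_eq_zero {n j : ℕ} (h : n < j) : stirling2 n j = 0 := by
  induction n generalizing j with
  | zero => obtain ⟨j, rfl⟩ := Nat.exists_eq_add_of_lt h; rfl
  | succ n ih =>
    obtain ⟨j, rfl⟩ : ∃ j', j = j' + 1 := ⟨j - 1, by omega⟩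
    show (j + 1) * stirling2 n (j + 1) + stirling2 n j = 0
    rw [ih (by omega), ih (by omega)]; ring

lemma stirling2_self (n : ℕ) : stirling2 n n = 1 := by
  induction n with
  | zero => rfl
  | succ n ih =>
    show (n + 1) * stirling2 n (n + 1) + stirling2 n n = 1
    rw [stirling2_eq_zero (by omega), ih]; ring

lemma pow_eq_sum_stirling (i d : ℕ) :
    i ^ d = ∑ j ∈ Finset.range (d + 1), stirling2 d j * i.descFactorial j := by
  induction d with
  | zero => simp [stirling2]
  | succ d ih =>
    have hmul : ∀ j, i * i.descFactorial j =
        i.descFactorial (j + 1) + j * i.descFactorial j := by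
      intro j
      rcases Nat.lt_or_ge i j with h | h
      · rw [Nat.descFactorial_eq_zero_iff_lt.2 h,
          Nat.descFactorial_eq_zero_iff_lt.2 (by omega)]
        ring
      · rw [Nat.descFactorial_succ]
        have : i - j + j = i := by omega
        nlinarith [Nat.sub_add_cancel h]
    have : i ^ (d + 1) = i * i ^ d := by ring
    rw [this, ih, Finset.mul_sum]
    have lhs_eq : ∑ j ∈ Finset.range (d + 1), i * (stirling2 d j * i.descFactorial j)
        = (∑ j ∈ Finset.range (d + 1), stirling2 d j * i.descFactorial (j + 1))
          + ∑ j ∈ Finset.range (d + 1), j * stirling2 d j * i.descFactorial j := by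
      rw [← Finset.sum_add_distrib]
      refine Finset.sum_congr rfl fun j _ => ?_
      rw [mul_left_comm, hmul j]; ring
    rw [lhs_eq]
    -- reindex second sum: drop j = 0 term, shift
    have h2 : ∑ j ∈ Finset.range (d + 1), j * stirling2 d j * i.descFactorial j
        = ∑ j ∈ Finset.range d, (j + 1) * stirling2 d (j + 1) * i.descFactorial (j + 1) := by
      rw [Finset.sum_range_succ' (fun j => j * stirling2 d j * i.descFactorial j) d]
      simp
    rw [h2]
    -- extend range d to range (d+1) using stirling2 d (d+1) = 0
    have h3 : ∑ j ∈ Finset.range d, (j + 1) * stirling2 d (j + 1) * i.descFactorial (j + 1)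
        = ∑ j ∈ Finset.range (d + 1), (j + 1) * stirling2 d (j + 1) * i.descFactorial (j + 1) := by
      rw [Finset.sum_range_succ, stirling2_eq_zero (show d < d + 1 by omega)]
      ring
    rw [h3, ← Finset.sum_add_distrib]
    rw [Finset.sum_range_succ' (fun j => stirling2 (d + 1) j * i.descFactorial j) (d + 1)]
    have h0 : stirling2 (d + 1) 0 = 0 := rfl
    rw [h0]
    simp only [zero_mul, add_zero]
    refine Finset.sum_congr rfl fun j _ => ?_
    show stirling2 d j * i.descFactorial (j + 1) + (j + 1) * stirling2 d (j + 1) * i.descFactorial (j + 1)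
      = stirling2 (d + 1) (j + 1) * i.descFactorial (j + 1)
    show _ = ((j + 1) * stirling2 d (j + 1) + stirling2 d j) * i.descFactorial (j + 1)
    ring

lemma iter_deriv_partitionPoly (k : ℕ) (m : ℕ → ℕ) (j : ℕ) :
    iteratedDeriv j (partitionPoly k m) =
      fun x => ∑ i ∈ Finset.Icc 1 k, (m i : ℝ) * (i.descFactorial j : ℝ) * x ^ (i - j) := by
  induction j with
  | zero => funext x; simp [partitionPoly]
  | succ j ih =>
    rw [iteratedDeriv_succ, ih]
    funext x
    rw [deriv_fun_sum (fun i _ => by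
      exact ((differentiable_pow (i - j)).const_mul _).differentiableAt)]
    refine Finset.sum_congr rfl fun i _ => ?_
    rw [deriv_const_mul _ (differentiable_pow (i - j)).differentiableAt, deriv_pow_field]
    rw [Nat.descFactorial_succ, Nat.sub_sub]
    push_cast
    ring

theorem stmt1 (k : ℕ) (m : ℕ → ℕ) (d : ℕ) (hd : d ≤ k) (x : ℝ) (hx : x ≠ 0) :
    iteratedDeriv d (partitionPoly k m) x =
      (∑ i ∈ Finset.Icc 1 k, (i : ℝ) ^ d * (m i : ℝ) * x ^ ((i : ℤ) - (d : ℤ))) -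
        ∑ j ∈ Finset.range d,
          (stirling2 d j : ℝ) * x ^ ((j : ℤ) - (d : ℤ)) *
            iteratedDeriv j (partitionPoly k m) x := by
  have hform : ∀ j, iteratedDeriv j (partitionPoly k m) x =
      ∑ i ∈ Finset.Icc 1 k,
        (m i : ℝ) * (i.descFactorial j : ℝ) * x ^ ((i : ℤ) - (j : ℤ)) := by
    intro j
    rw [iter_deriv_partitionPoly]
    refine Finset.sum_congr rfl fun i _ => ?_
    rcases le_or_gt j i with h | h
    · rw [← zpow_natCast x (i - j), Nat.cast_sub h]
    · rw [Nat.descFactorial_eq_zero_iff_lt.2 h]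
      simp
  rw [hform d]
  simp only [hform]
  rw [eq_sub_iff_add_eq]
  have hB : ∀ j ∈ Finset.range d,
      (stirling2 d j : ℝ) * x ^ ((j : ℤ) - (d : ℤ)) *
        ∑ i ∈ Finset.Icc 1 k, (m i : ℝ) * (i.descFactorial j : ℝ) * x ^ ((i : ℤ) - (j : ℤ))
      = ∑ i ∈ Finset.Icc 1 k,
          (stirling2 d j : ℝ) * ((m i : ℝ) * (i.descFactorial j : ℝ)) * x ^ ((i : ℤ) - (d : ℤ)) := by
    intro j _
    rw [Finset.mul_sum]
    refine Finset.sum_congr rfl fun i _ => ?_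
    have hxx : x ^ ((j : ℤ) - (d : ℤ)) * x ^ ((i : ℤ) - (j : ℤ)) = x ^ ((i : ℤ) - (d : ℤ)) := by
      rw [← zpow_add₀ hx]
      congr 1
      ring
    calc (stirling2 d j : ℝ) * x ^ ((j : ℤ) - (d : ℤ)) *
          ((m i : ℝ) * (i.descFactorial j : ℝ) * x ^ ((i : ℤ) - (j : ℤ)))
        = (stirling2 d j : ℝ) * ((m i : ℝ) * (i.descFactorial j : ℝ)) *
            (x ^ ((j : ℤ) - (d : ℤ)) * x ^ ((i : ℤ) - (j : ℤ))) := by ring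
      _ = _ := by rw [hxx]
  rw [Finset.sum_congr rfl hB, Finset.sum_comm, ← Finset.sum_add_distrib]
  refine Finset.sum_congr rfl fun i _ => ?_
  have hkey : (i : ℝ) ^ d =
      ∑ j ∈ Finset.range (d + 1), (stirling2 d j : ℝ) * (i.descFactorial j : ℝ) := by
    have := pow_eq_sum_stirling i d
    have : ((i ^ d : ℕ) : ℝ) =
        ((∑ j ∈ Finset.range (d + 1), stirling2 d j * i.descFactorial j : ℕ) : ℝ) := by
      exact_mod_cast congrArg (Nat.cast : ℕ → ℝ) this
    push_cast at this
    exact this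
  rw [hkey, Finset.sum_range_succ, stirling2_self]
  simp only [add_mul, one_mul, Finset.sum_mul]
  rw [add_comm]
  congr 1
  · refine Finset.sum_congr rfl fun j _ => ?_
    ring
  · push_cast
    ring
end

section
/- Suppose α and β are partitions with equal lengths ℓ(α) = ℓ(β) and ∫₀¹ f̂_α = a, ∫₀¹ f̂_β = b with 0 < a < b < 1/2. Then for every c ∈ (a, b), there exists a sequence of partitions (δ_s) such that ∫₀¹ f̂_{δ_s}(x) dx → c as s → ∞. -/
/-- The normalized partition polynomial of a partition, given as the multiset of its parts:
`f̂_λ(x) = (1/ℓ(λ)) ∑_{p ∈ λ} x^p`. -/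
noncomputable def normPoly (lam : Multiset ℕ) (x : ℝ) : ℝ :=
  (lam.map fun p => x ^ p).sum / (Multiset.card lam : ℝ)

noncomputable def Tval (lam : Multiset ℕ) : ℝ :=
  (lam.map fun p => (1:ℝ)/(p+1)).sum

lemma cont_sum (lam : Multiset ℕ) :
    Continuous (fun x : ℝ => (lam.map fun p => x ^ p).sum) := by
  induction lam using Multiset.induction_on with
  | empty => simpa using continuous_const
  | cons p s ih =>
    simp only [Multiset.map_cons, Multiset.sum_cons]
    exact (continuous_pow p).add ih

lemma intS (lam : Multiset ℕ) :
    (∫ x in (0:ℝ)..1, (lam.map fun p => x ^ p).sum) = Tval lam := by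
  induction lam using Multiset.induction_on with
  | empty => simp [Tval]
  | cons p s ih =>
    simp only [Multiset.map_cons, Multiset.sum_cons, Tval]
    rw [intervalIntegral.integral_add ((continuous_pow p).intervalIntegrable _ _)
      ((cont_sum s).intervalIntegrable _ _), integral_pow, ih]
    simp only [Tval, Multiset.map_cons, Multiset.sum_cons]
    norm_num

lemma intNorm (lam : Multiset ℕ) :
    (∫ x in (0:ℝ)..1, normPoly lam x) = Tval lam / (Multiset.card lam : ℝ) := by
  simp only [normPoly, intervalIntegral.integral_div, intS]

lemma Tval_add (s t : Multiset ℕ) : Tval (s + t) = Tval s + Tval t := by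
  simp [Tval]

lemma Tval_nsmul (k : ℕ) (s : Multiset ℕ) : Tval (k • s) = k * Tval s := by
  induction k with
  | zero => simp [Tval]
  | succ n ih => rw [succ_nsmul, Tval_add, ih]; push_cast; ring

theorem stmt17 (α β : Multiset ℕ)
    (hα : α ≠ 0) (hβ : β ≠ 0)
    (hαp : ∀ p ∈ α, 0 < p) (hβp : ∀ p ∈ β, 0 < p)
    (hcard : Multiset.card α = Multiset.card β)
    (a b : ℝ)
    (ha : ∫ x in (0:ℝ)..1, normPoly α x = a)
    (hb : ∫ x in (0:ℝ)..1, normPoly β x = b)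
    (h0a : 0 < a) (hab : a < b) (hb2 : b < 1 / 2)
    (c : ℝ) (hc : c ∈ Set.Ioo a b) :
    ∃ δ : ℕ → Multiset ℕ,
      (∀ s, δ s ≠ 0 ∧ ∀ p ∈ δ s, 0 < p) ∧
      Filter.Tendsto (fun s => ∫ x in (0:ℝ)..1, normPoly (δ s) x)
        Filter.atTop (nhds c) := by
  obtain ⟨hac, hcb⟩ := hc
  set n : ℕ := Multiset.card α with hn
  have hn0 : 0 < n := by simpa [hn, Multiset.card_pos] using hα
  have hnR : (0:ℝ) < (n : ℝ) := Nat.cast_pos.mpr hn0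
  have hba : (0:ℝ) < b - a := by linarith
  set t : ℝ := (c - a) / (b - a) with hT
  have ht0 : 0 < t := div_pos (by linarith) hba
  have ht1 : t < 1 := (div_lt_one hba).mpr (by linarith)
  set m : ℕ → ℕ := fun s => ⌊t * (s + 1)⌋₊ with hm
  have hms : ∀ s : ℕ, m s ≤ s := by
    intro s
    have h1 : t * ((s:ℝ) + 1) < (s:ℝ) + 1 := by
      have hs : (0:ℝ) < (s:ℝ) + 1 := by positivity
      nlinarith
    have h2 : m s < s + 1 := by
      rw [hm]
      refine (Nat.floor_lt (by positivity)).mpr ?_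
      push_cast
      exact h1
    omega
  have hTa : Tval α = a * n := by
    rw [intNorm, ← hn] at ha
    field_simp at ha
    linarith
  have hTb : Tval β = b * n := by
    rw [intNorm, ← hcard] at hb
    field_simp at hb
    linarith
  refine ⟨fun s => (s + 1 - m s) • α + m s • β, ?_, ?_⟩
  · intro s
    show ((s + 1 - m s) • α + m s • β ≠ 0) ∧ ∀ p ∈ (s + 1 - m s) • α + m s • β, 0 < p
    constructor
    · intro h
      have hc0 : Multiset.card ((s + 1 - m s) • α + m s • β) = 0 := by rw [h]; simp
      rw [Multiset.card_add, Multiset.card_nsmul, Multiset.card_nsmul, ← hcard, ← hn] at hc0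
      have h4 : (s + 1 - m s) * n = 0 := Nat.eq_zero_of_add_eq_zero_right hc0
      have h1 := hms s
      rcases Nat.mul_eq_zero.mp h4 with h5 | h5 <;> omega
    · intro p hp
      rcases Multiset.mem_add.mp hp with h | h
      · exact hαp p (Multiset.mem_of_mem_nsmul h)
      · exact hβp p (Multiset.mem_of_mem_nsmul h)
  · show Filter.Tendsto
        (fun s => ∫ x in (0:ℝ)..1, normPoly ((s + 1 - m s) • α + m s • β) x)
        Filter.atTop (nhds c)
    have hval : ∀ s : ℕ, (∫ x in (0:ℝ)..1, normPoly ((s + 1 - m s) • α + m s • β) x)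
        = a + (b - a) * ((m s : ℝ) / ((s : ℝ) + 1)) := by
      intro s
      have hle := hms s
      have hcast : ((s + 1 - m s : ℕ) : ℝ) = (s : ℝ) + 1 - (m s : ℝ) := by
        push_cast [Nat.cast_sub (by omega : m s ≤ s + 1)]
        ring
      rw [intNorm, Tval_add, Tval_nsmul, Tval_nsmul, hTa, hTb,
        Multiset.card_add, Multiset.card_nsmul, Multiset.card_nsmul, ← hcard, ← hn,
        Nat.cast_add, Nat.cast_mul, Nat.cast_mul, hcast]
      have hs1 : (0:ℝ) < (s : ℝ) + 1 := by positivity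
      have hden : ((s:ℝ) + 1 - (m s : ℝ)) * n + (m s : ℝ) * n ≠ 0 := by
        have he : ((s:ℝ) + 1 - (m s : ℝ)) * n + (m s : ℝ) * n = ((s:ℝ) + 1) * n := by ring
        rw [he]; positivity
      field_simp
      ring
    simp only [hval]
    have hlim : Filter.Tendsto (fun s : ℕ => (m s : ℝ) / ((s : ℝ) + 1))
        Filter.atTop (nhds t) := by
      have h0 : Filter.Tendsto (fun s : ℕ => (1:ℝ) / ((s:ℝ) + 1)) Filter.atTop (nhds 0) :=
        tendsto_one_div_add_atTop_nhds_zero_nat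
      refine tendsto_of_tendsto_of_tendsto_of_le_of_le
        (g := fun s : ℕ => t - 1 / ((s:ℝ) + 1)) (h := fun _ : ℕ => t)
        (by simpa using (tendsto_const_nhds.sub h0)) tendsto_const_nhds
        (fun s => ?_) (fun s => ?_)
      · show t - 1 / ((s:ℝ) + 1) ≤ (m s : ℝ) / ((s : ℝ) + 1)
        have hs1 : (0:ℝ) < (s : ℝ) + 1 := by positivity
        have hfl : t * ((s:ℝ) + 1) - 1 < (m s : ℝ) := by
          have h2 := Nat.lt_floor_add_one (t * ((s:ℝ) + 1))
          rw [hm]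
          push_cast
          linarith
        rw [sub_le_iff_le_add, ← add_div, le_div_iff₀ hs1]
        nlinarith
      · show (m s : ℝ) / ((s : ℝ) + 1) ≤ t
        have hs1 : (0:ℝ) < (s : ℝ) + 1 := by positivity
        rw [div_le_iff₀ hs1]
        have h3 := Nat.floor_le (by positivity : (0:ℝ) ≤ t * ((s:ℝ)+1))
        rw [hm]
        push_cast
        linarith
    have hfin := ((tendsto_const_nhds : Filter.Tendsto (fun _ : ℕ => a) Filter.atTop (nhds a)).add (hlim.const_mul (b - a)))
    have hct : a + (b - a) * t = c := by
      rw [hT]; field_simp; ring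
    simpa [hct] using hfin
end

section
/- The set {∫₀¹ f̂_λ(x) dx : λ a nonempty partition} is dense in the interval [0, 1/2]. -/
lemma normPoly_int (lam : Multiset ℕ) :
    (∫ x in (0:ℝ)..1, (lam.map fun p => x ^ p).sum)
      = (lam.map fun p : ℕ => (1:ℝ) / ((p:ℝ) + 1)).sum := by
  induction lam using Multiset.induction_on with
  | empty => simp
  | cons a s ih =>
    simp only [Multiset.map_cons, Multiset.sum_cons]
    rw [intervalIntegral.integral_add
      ((continuous_pow a).intervalIntegrable 0 1)
      ((continuous_multiset_sum s fun i _ => continuous_pow i).intervalIntegrable 0 1),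
      ih, integral_pow]
    norm_num

lemma normPoly_int' (lam : Multiset ℕ) :
    (∫ x in (0:ℝ)..1, normPoly lam x)
      = (lam.map fun p : ℕ => (1:ℝ) / ((p:ℝ) + 1)).sum / (Multiset.card lam : ℝ) := by
  unfold normPoly
  rw [intervalIntegral.integral_div, normPoly_int]

theorem stmt18 :
    Set.Icc (0 : ℝ) (1 / 2) ⊆
      closure {y : ℝ | ∃ lam : Multiset ℕ, lam ≠ 0 ∧ (∀ p ∈ lam, 0 < p) ∧
        (∫ x in (0:ℝ)..1, normPoly lam x) = y} := by
  intro y hy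
  obtain ⟨hy0, hy2⟩ := hy
  rw [Metric.mem_closure_iff]
  intro ε hε
  set N : ℕ := ⌈2/ε⌉₊ + 1 with hNdef
  have hN1 : 1 ≤ N := Nat.le_add_left 1 _
  have hNpos : (0:ℝ) < N := by exact_mod_cast hN1
  have hNε : 2/ε < (N:ℝ) := by
    calc 2/ε ≤ (⌈2/ε⌉₊ : ℝ) := Nat.le_ceil _
    _ < N := by exact_mod_cast Nat.lt_succ_self _
  have hεN : 1/(N:ℝ) < ε/2 := by
    rw [div_lt_div_iff₀ hNpos (by norm_num)]
    rw [div_lt_iff₀ hε] at hNε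
    linarith
  set a : ℕ := ⌊2*y*(N:ℝ)⌋₊ with hadef
  have haN : a ≤ N := by
    have h1 : 2*y*(N:ℝ) ≤ (N:ℝ) := by nlinarith
    have := Nat.floor_le_of_le h1
    simpa using this
  have hA1 : (a:ℝ) ≤ 2*y*(N:ℝ) := Nat.floor_le (by positivity)
  have hA2 : 2*y*(N:ℝ) < a + 1 := Nat.lt_floor_add_one _
  refine ⟨_, ⟨Multiset.replicate a 1 + Multiset.replicate (N-a) N, ?_, ?_, rfl⟩, ?_⟩
  · intro h
    have := congrArg Multiset.card h
    simp at this
    omega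
  · intro p hp
    rw [Multiset.mem_add, Multiset.mem_replicate, Multiset.mem_replicate] at hp
    rcases hp with ⟨_, rfl⟩ | ⟨_, rfl⟩ <;> omega
  · rw [normPoly_int']
    simp only [Multiset.map_add, Multiset.map_replicate, Multiset.sum_add,
      Multiset.sum_replicate, Multiset.card_add, Multiset.card_replicate, nsmul_eq_mul]
    have hcast : ((N - a : ℕ) : ℝ) = (N:ℝ) - a := by
      push_cast [haN]; ring
    have hcard : ((a + (N - a) : ℕ) : ℝ) = (N:ℝ) := by
      push_cast [haN]; ring
    rw [hcast, hcard]
    norm_num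
    have hBnn : (0:ℝ) ≤ (N:ℝ) - a := by
      have : (a:ℝ) ≤ N := by exact_mod_cast haN
      linarith
    have hn1 : (0:ℝ) < (N:ℝ) + 1 := by linarith
    rw [Real.dist_eq, abs_lt]
    have hv : ((a:ℝ) * (1 / 2) + ((N:ℝ) - a) * ((N:ℝ) + 1)⁻¹) / N
        = (a:ℝ)/(2*(N:ℝ)) + ((N:ℝ) - a)/((N:ℝ)*((N:ℝ)+1)) := by
      field_simp
    rw [hv]
    have hq1 : (a:ℝ)/(2*(N:ℝ)) ≤ y := by
      rw [div_le_iff₀ (by positivity)]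
      linarith
    have hq2 : y - (a:ℝ)/(2*(N:ℝ)) < 1/(2*(N:ℝ)) := by
      rw [sub_lt_iff_lt_add, ← add_div, lt_div_iff₀ (by positivity)]
      linarith
    have h12 : 1/(2*(N:ℝ)) ≤ 1/(N:ℝ) := by
      rw [div_le_div_iff₀ (by positivity) hNpos]
      linarith
    have hq3 : (0:ℝ) ≤ ((N:ℝ) - a)/((N:ℝ)*((N:ℝ)+1)) :=
      div_nonneg hBnn (by positivity)
    have hq4 : ((N:ℝ) - a)/((N:ℝ)*((N:ℝ)+1)) ≤ 1/(N:ℝ) := by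
      rw [div_le_div_iff₀ (by positivity) hNpos]
      nlinarith
    constructor <;> linarith
end
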